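/- Let f(m) = m^{-(2+d)} ξ^{-3} + m^{-(1+d)} ξ^{-(2+1/b)} + m^{-d} ξ^{-1} + ξ^{c} + m^{-2} ξ^{-1} + m^{-1} ξ^{-1/b} with b > 1, c ∈ (1,2], d > 0. If d ≤ b(c+1)/(bc+1) and ξ = m^{-d/(c+1)}, then f(m) = O(m^{-dc/(c+1)}) as m → ∞; if d > b(c+1)/(bc+1) and ξ = m^{-b/(bc+1)}, then f(m) = O(m^{-bc/(bc+1)}). -/

import Mathlib

open Filter Asymptotics

lemma rpow_isBigO {p q : ℝ} (h : p ≤ q) :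
    (fun m : ℝ => m ^ p) =O[atTop] (fun m : ℝ => m ^ q) := by
  apply IsBigO.of_bound 1
  filter_upwards [eventually_ge_atTop 1] with m hm
  have hm0 : (0:ℝ) ≤ m := by linarith
  rw [one_mul, Real.norm_rpow_of_nonneg hm0, Real.norm_rpow_of_nonneg hm0,
    Real.norm_of_nonneg hm0]
  exact Real.rpow_le_rpow_of_exponent_le hm h

lemma aux_bigO (b d c α r : ℝ)
    (h1 : -(2 + d) + -α * -(3:ℝ) ≤ -r) (h2 : -(1 + d) + -α * -(2 + 1/b) ≤ -r)
    (h3 : -d + -α * -1 ≤ -r) (h4 : -α * c ≤ -r) (h5 : -(2:ℝ) + -α * -1 ≤ -r)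
    (h6 : -1 + -α * -(1/b) ≤ -r) :
    (fun m : ℝ => m ^ (-(2 + d)) * (m ^ (-α)) ^ (-(3 : ℝ)) + m ^ (-(1 + d)) * (m ^ (-α)) ^ (-(2 + 1 / b))
      + m ^ (-d) * (m ^ (-α))⁻¹ + (m ^ (-α)) ^ c + m ^ (-(2 : ℝ)) * (m ^ (-α))⁻¹ + m⁻¹ * (m ^ (-α)) ^ (-(1 / b)))
      =O[atTop] fun m : ℝ => m ^ (-r) := by
  have heq : (fun m : ℝ => m ^ (-(2 + d)) * (m ^ (-α)) ^ (-(3 : ℝ)) + m ^ (-(1 + d)) * (m ^ (-α)) ^ (-(2 + 1 / b))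
      + m ^ (-d) * (m ^ (-α))⁻¹ + (m ^ (-α)) ^ c + m ^ (-(2 : ℝ)) * (m ^ (-α))⁻¹ + m⁻¹ * (m ^ (-α)) ^ (-(1 / b)))
      =ᶠ[atTop] (fun m : ℝ => m ^ (-(2 + d) + -α * -(3:ℝ)) + m ^ (-(1 + d) + -α * -(2 + 1/b))
        + m ^ (-d + -α * -1) + m ^ (-α * c) + m ^ (-(2:ℝ) + -α * -1) + m ^ (-1 + -α * -(1/b))) := by
    filter_upwards [eventually_gt_atTop 0] with m hm
    rw [← Real.rpow_neg_one (m ^ (-α)), ← Real.rpow_neg_one m]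
    simp only [← Real.rpow_mul hm.le, ← Real.rpow_add hm]
  refine IsBigO.congr' ?_ heq.symm EventuallyEq.rfl
  exact (((((rpow_isBigO h1).add (rpow_isBigO h2)).add (rpow_isBigO h3)).add
    (rpow_isBigO h4)).add (rpow_isBigO h5)).add (rpow_isBigO h6)

set_option maxHeartbeats 1600000 in
theorem stmt_18 (b c d : ℝ) (hb : 1 < b) (hc1 : 1 < c) (hc2 : c ≤ 2) (hd : 0 < d)
    (f : ℝ → ℝ → ℝ)
    (hf : ∀ m ξ, f m ξ = m ^ (-(2 + d)) * ξ ^ (-(3 : ℝ)) + m ^ (-(1 + d)) * ξ ^ (-(2 + 1 / b))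
      + m ^ (-d) * ξ⁻¹ + ξ ^ c + m ^ (-(2 : ℝ)) * ξ⁻¹ + m⁻¹ * ξ ^ (-(1 / b))) :
    (d ≤ b * (c + 1) / (b * c + 1) →
      (fun m : ℝ => f m (m ^ (-(d / (c + 1))))) =O[atTop]
        fun m : ℝ => m ^ (-(d * c / (c + 1)))) ∧
    (d > b * (c + 1) / (b * c + 1) →
      (fun m : ℝ => f m (m ^ (-(b / (b * c + 1))))) =O[atTop]
        fun m : ℝ => m ^ (-(b * c / (b * c + 1)))) := by
  have hbp : (0:ℝ) < b := by linarith
  have hcp : (0:ℝ) < c + 1 := by linarith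
  have hbc : (0:ℝ) < b * c + 1 := by nlinarith
  have hu : 1/b * b = 1 := by field_simp
  constructor
  · intro hle
    have hdle : d * (b*c+1) ≤ b * (c+1) := by
      rw [le_div_iff₀ hbc] at hle; linarith
    have hd1 : d ≤ c + 1 := by nlinarith
    have hd2 : d ≤ 2 := by nlinarith
    have hd3 : d * (b+1) ≤ b * (c+1) := by
      nlinarith [hdle, mul_nonneg hd.le (by nlinarith : (0:ℝ) ≤ b*c - b)]
    have hA : d/(c+1) * (c+1) = d := by field_simp
    have hR : d*c/(c+1) * (c+1) = d*c := by field_simp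
    have hAu : (d/(c+1)) * (1/b) * ((c+1)*b) = d := by field_simp
    simp only [hf]
    refine aux_bigO b d c (d/(c+1)) (d*c/(c+1)) ?_ ?_ ?_ ?_ ?_ ?_
    · nlinarith [hA, hR, hcp]
    · nlinarith [hA, hR, hAu, mul_pos hcp hbp]
    · nlinarith [hA, hR, hcp]
    · exact le_of_eq (by ring)
    · nlinarith [hA, hR, hcp]
    · nlinarith [hA, hR, hAu, mul_pos hcp hbp]
  · intro hgt
    have hdgt : b * (c+1) < d * (b*c+1) := by
      rw [gt_iff_lt, div_lt_iff₀ hbc] at hgt; linarith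
    have hA : b/(b*c+1) * (b*c+1) = b := by field_simp
    have hR : b*c/(b*c+1) * (b*c+1) = b*c := by field_simp
    have hAu : (b/(b*c+1)) * (1/b) * ((b*c+1)*b) = b := by field_simp
    have hAb : b/(b*c+1) * ((b*c+1)*b) = b*b := by field_simp
    have hRb : b*c/(b*c+1) * ((b*c+1)*b) = b*c*b := by field_simp
    have hdgtb : b*(c+1)*b < d*(b*c+1)*b := by nlinarith
    simp only [hf]
    refine aux_bigO b d c (b/(b*c+1)) (b*c/(b*c+1)) ?_ ?_ ?_ ?_ ?_ ?_
    · nlinarith [hA, hR, hbc]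
    · have key : -(b*c/(b*c+1)) - (-(1 + d) + -(b/(b*c+1)) * -(2 + 1/b))
          = (d*(b*c+1) - 2*b)/(b*c+1) := by
        field_simp
        ring
      have hnum : (0:ℝ) ≤ (d*(b*c+1) - 2*b)/(b*c+1) :=
        div_nonneg (by nlinarith) hbc.le
      linarith
    · nlinarith [hA, hR, hbc]
    · exact le_of_eq (by ring)
    · nlinarith [hA, hR, hbc]
    · nlinarith [hA, hR, hAu, mul_pos hbc hbp]
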